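/- Let B be a cocommutative Hopf algebra, L a normalized commuting 2-cocycle and σ = L∘(id⊗S)∘Δ. Then σ∘S = σ. -/

import Mathlib

open TensorProduct Coalgebra

variable {B : Type} [Ring B] [HopfAlgebra ℂ B]

/-- The comultiplication `Λ = (id ⊗ τ ⊗ id) ∘ (Δ ⊗ Δ)` of `B ⊗ B`. -/
noncomputable def Lam : B ⊗[ℂ] B →ₗ[ℂ] (B ⊗[ℂ] B) ⊗[ℂ] (B ⊗[ℂ] B) :=
  (TensorProduct.tensorTensorTensorComm ℂ B B B B).toLinearMap ∘ₗ
    TensorProduct.map (comul (R := ℂ)) (comul (R := ℂ))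

/-- Convolution of linear functionals w.r.t. a given comultiplication. -/
noncomputable def convWith {M : Type} [AddCommGroup M] [Module ℂ M]
    (Δ : M →ₗ[ℂ] M ⊗[ℂ] M) (φ ψ : M →ₗ[ℂ] ℂ) : M →ₗ[ℂ] ℂ :=
  LinearMap.mul' ℂ ℂ ∘ₗ TensorProduct.map φ ψ ∘ₗ Δ

/-- Convolution powers `φ^{⋆n}` w.r.t. a comultiplication `Δ` and counit `ε` (the 0-th
power being the counit). -/
noncomputable def convPowWith {M : Type} [AddCommGroup M] [Module ℂ M]
    (Δ : M →ₗ[ℂ] M ⊗[ℂ] M) (ε : M →ₗ[ℂ] ℂ) (φ : M →ₗ[ℂ] ℂ) : ℕ → (M →ₗ[ℂ] ℂ)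
  | 0 => ε
  | n + 1 => convWith Δ φ (convPowWith Δ ε φ n)

/-- The counit `δ ⊗ δ` of `B ⊗ B`. -/
noncomputable def counit2 : B ⊗[ℂ] B →ₗ[ℂ] ℂ :=
  LinearMap.mul' ℂ ℂ ∘ₗ TensorProduct.map (counit (R := ℂ)) (counit (R := ℂ))

/-- `L ⋆ μ = (L ⊗ μ) ∘ Λ : B ⊗ B → B`. -/
noncomputable def LconvMu (L : B ⊗[ℂ] B →ₗ[ℂ] ℂ) : B ⊗[ℂ] B →ₗ[ℂ] B :=
  (TensorProduct.lid ℂ B).toLinearMap ∘ₗ TensorProduct.map L (LinearMap.mul' ℂ B) ∘ₗ Lam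

/-- `μ ⋆ L = (μ ⊗ L) ∘ Λ : B ⊗ B → B`. -/
noncomputable def MuConvL (L : B ⊗[ℂ] B →ₗ[ℂ] ℂ) : B ⊗[ℂ] B →ₗ[ℂ] B :=
  (TensorProduct.rid ℂ B).toLinearMap ∘ₗ TensorProduct.map (LinearMap.mul' ℂ B) L ∘ₗ Lam

/-- `σ = L ∘ (id ⊗ S) ∘ Δ : B → ℂ`. -/
noncomputable def sigma (L : B ⊗[ℂ] B →ₗ[ℂ] ℂ) : B →ₗ[ℂ] ℂ :=
  L ∘ₗ TensorProduct.map LinearMap.id (HopfAlgebra.antipode (R := ℂ)) ∘ₗ comul (R := ℂ)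

open TensorProduct Coalgebra LinearMap

noncomputable section ConvFramework
variable {C A : Type} [AddCommGroup C] [Module ℂ C] [Coalgebra ℂ C]
  [Ring A] [Algebra ℂ A]

def cv (f g : C →ₗ[ℂ] A) : C →ₗ[ℂ] A :=
  LinearMap.mul' ℂ A ∘ₗ TensorProduct.map f g ∘ₗ comul

def cu : C →ₗ[ℂ] A := Algebra.linearMap ℂ A ∘ₗ counit

lemma cv_apply_repr (f g : C →ₗ[ℂ] A) {ι : Type*} {x : C} (r : Coalgebra.Repr ℂ x ι) :
    cv f g x = ∑ i ∈ r.index, f (r.left i) * g (r.right i) := by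
  simp only [cv, LinearMap.comp_apply, ← r.eq, map_sum, TensorProduct.map_tmul,
    LinearMap.mul'_apply]

lemma cu_apply (x : C) : (cu : C →ₗ[ℂ] A) x = counit (R := ℂ) x • 1 := by
  simp [cu, Algebra.algebraMap_eq_smul_one]

lemma sum_counit_smul_right {ι : Type*} {x : C} (r : Coalgebra.Repr ℂ x ι) :
    ∑ i ∈ r.index, counit (R := ℂ) (r.left i) • r.right i = x := by
  have h := congrArg (TensorProduct.lid ℂ C) (sum_counit_tmul_eq r)
  rw [map_sum] at h
  simp only [_root_.TensorProduct.lid_tmul, one_smul] at h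
  exact h

lemma sum_counit_smul_left {ι : Type*} {x : C} (r : Coalgebra.Repr ℂ x ι) :
    ∑ i ∈ r.index, counit (R := ℂ) (r.right i) • r.left i = x := by
  have h := congrArg (TensorProduct.rid ℂ C) (sum_tmul_counit_eq r)
  rw [map_sum] at h
  simp only [_root_.TensorProduct.rid_tmul, one_smul] at h
  exact h

lemma cv_cu (f : C →ₗ[ℂ] A) : cv f cu = f := by
  ext x
  rw [cv_apply_repr f cu (ℛ ℂ x)]
  calc ∑ i ∈ (ℛ ℂ x).index, f ((ℛ ℂ x).left i) * cu ((ℛ ℂ x).right i)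
      = f (∑ i ∈ (ℛ ℂ x).index, counit (R := ℂ) ((ℛ ℂ x).right i) • (ℛ ℂ x).left i) := by
        rw [map_sum]; congr 1; ext i
        rw [cu_apply, mul_smul_comm, mul_one, map_smul]
    _ = f x := by rw [sum_counit_smul_left]

lemma cu_cv (f : C →ₗ[ℂ] A) : cv cu f = f := by
  ext x
  rw [cv_apply_repr cu f (ℛ ℂ x)]
  calc ∑ i ∈ (ℛ ℂ x).index, cu ((ℛ ℂ x).left i) * f ((ℛ ℂ x).right i)
      = f (∑ i ∈ (ℛ ℂ x).index, counit (R := ℂ) ((ℛ ℂ x).left i) • (ℛ ℂ x).right i) := by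
        rw [map_sum]; congr 1; ext i
        rw [cu_apply, smul_mul_assoc, one_mul, map_smul]
    _ = f x := by rw [sum_counit_smul_right]

lemma cv_assoc (f g h : C →ₗ[ℂ] A) : cv (cv f g) h = cv f (cv g h) := by
  ext x
  set r := ℛ ℂ x
  rw [cv_apply_repr (cv f g) h r, cv_apply_repr f (cv g h) r]
  have key := sum_map_tmul_tmul_eq (R := ℂ) f g h x (repr := r)
    (a₁ := fun i => ℛ ℂ (r.left i)) (a₂ := fun i => ℛ ℂ (r.right i))
  have := congrArg (LinearMap.mul' ℂ A ∘ₗ (LinearMap.mul' ℂ A).lTensor A) key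
  simp only [map_sum, LinearMap.comp_apply, lTensor_tmul, LinearMap.mul'_apply] at this
  calc ∑ i ∈ r.index, cv f g (r.left i) * h (r.right i)
      = ∑ i ∈ r.index, ∑ j ∈ (ℛ ℂ (r.left i)).index,
          f ((ℛ ℂ (r.left i)).left j) * (g ((ℛ ℂ (r.left i)).right j) * h (r.right i)) := by
        refine Finset.sum_congr rfl fun i _ => ?_
        rw [cv_apply_repr f g (ℛ ℂ (r.left i)), Finset.sum_mul]
        simp [mul_assoc]
    _ = ∑ i ∈ r.index, ∑ j ∈ (ℛ ℂ (r.right i)).index,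
          f (r.left i) * (g ((ℛ ℂ (r.right i)).left j) * h ((ℛ ℂ (r.right i)).right j)) :=
        this.symm
    _ = ∑ i ∈ r.index, f (r.left i) * cv g h (r.right i) := by
        refine Finset.sum_congr rfl fun i _ => ?_
        rw [cv_apply_repr g h (ℛ ℂ (r.right i)), Finset.mul_sum]

lemma cv_inv_unique {f g h : C →ₗ[ℂ] A} (h1 : cv f g = cu) (h2 : cv h f = cu) : g = h := by
  have : cv h (cv f g) = cv (cv h f) g := (cv_assoc h f g).symm
  rw [h1, h2, cv_cu, cu_cv] at this
  exact this.symm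
end ConvFramework

noncomputable section HopfFacts
variable {B : Type} [Ring B] [HopfAlgebra ℂ B]
local notation "S" => HopfAlgebra.antipode (R := ℂ) (A := B)

lemma cv_S_id : cv S LinearMap.id = (cu : B →ₗ[ℂ] B) :=
  HopfAlgebra.mul_antipode_rTensor_comul (R := ℂ) (A := B)

lemma cv_id_S : cv LinearMap.id S = (cu : B →ₗ[ℂ] B) :=
  HopfAlgebra.mul_antipode_lTensor_comul (R := ℂ) (A := B)

lemma counit_comp_antipode :
    (counit (R := ℂ) (A := B)) ∘ₗ S = counit (R := ℂ) (A := B) := by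
  have hcu : (cu : B →ₗ[ℂ] ℂ) = counit (R := ℂ) := by
    ext x; simp [cu]
  have h1 : cv (counit (R := ℂ) ∘ₗ S) (counit (R := ℂ)) = (cu : B →ₗ[ℂ] ℂ) := by
    ext x
    rw [cv_apply_repr _ _ (ℛ ℂ x), hcu]
    calc ∑ i ∈ (ℛ ℂ x).index,
          (counit (R := ℂ) ∘ₗ S) ((ℛ ℂ x).left i) * counit (R := ℂ) ((ℛ ℂ x).right i)
        = counit (R := ℂ)
            (∑ i ∈ (ℛ ℂ x).index, S ((ℛ ℂ x).left i) * (ℛ ℂ x).right i) := by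
          rw [map_sum]
          exact Finset.sum_congr rfl fun i _ => (Bialgebra.counit_mul _ _).symm
      _ = counit (R := ℂ) x := by
          rw [HopfAlgebra.sum_antipode_mul_eq_smul]; simp
  have h2 : cv (counit (R := ℂ)) (counit (R := ℂ)) = (cu : B →ₗ[ℂ] ℂ) := by
    rw [← hcu, cu_cv]
  exact (cv_inv_unique h2 h1).symm

lemma antipode_one : S (1 : B) = 1 := by
  have := HopfAlgebra.mul_antipode_rTensor_comul_apply (R := ℂ) (A := B) 1
  simpa [Algebra.TensorProduct.one_def] using this

lemma cv_comulS_comul :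
    cv ((comul (R := ℂ)) ∘ₗ S) (comul (R := ℂ)) = (cu : B →ₗ[ℂ] B ⊗[ℂ] B) := by
  ext x
  rw [cv_apply_repr _ _ (ℛ ℂ x), cu_apply]
  calc ∑ i ∈ (ℛ ℂ x).index,
        ((comul (R := ℂ)) ∘ₗ S) ((ℛ ℂ x).left i) * comul (R := ℂ) ((ℛ ℂ x).right i)
      = comul (R := ℂ) (∑ i ∈ (ℛ ℂ x).index, S ((ℛ ℂ x).left i) * (ℛ ℂ x).right i) := by
        rw [map_sum]
        exact Finset.sum_congr rfl fun i _ => (Bialgebra.comul_mul _ _).symm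
    _ = counit (R := ℂ) x • 1 := by
        rw [HopfAlgebra.sum_antipode_mul_eq_smul]; simp
end HopfFacts

noncomputable section Key
variable {B : Type} [Ring B] [HopfAlgebra ℂ B]
local notation "S" => HopfAlgebra.antipode (R := ℂ) (A := B)
local notation "Δ" => Coalgebra.comul (R := ℂ) (A := B)
/-- `(p ⊗ (q ⊗ t)) ⊗ s ↦ (p ⊗ q) ⊗ (t ⊗ s)` -/
def ρΨ : (B ⊗[ℂ] (B ⊗[ℂ] B)) ⊗[ℂ] B →ₗ[ℂ] (B ⊗[ℂ] B) ⊗[ℂ] (B ⊗[ℂ] B) :=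
  (TensorProduct.assoc ℂ (B ⊗[ℂ] B) B B).toLinearMap ∘ₗ
    ((TensorProduct.assoc ℂ B B B).symm.toLinearMap.rTensor B)

/-- `(p ⊗ (q ⊗ t)) ⊗ s ↦ (p ⊗ t) ⊗ (q ⊗ s)` -/
def ρΦ : (B ⊗[ℂ] (B ⊗[ℂ] B)) ⊗[ℂ] B →ₗ[ℂ] (B ⊗[ℂ] B) ⊗[ℂ] (B ⊗[ℂ] B) :=
  ρΨ ∘ₗ (((TensorProduct.comm ℂ B B).toLinearMap.lTensor B).rTensor B)

@[simp] lemma ρΨ_tmul (p q t s : B) :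
    ρΨ ((p ⊗ₜ[ℂ] (q ⊗ₜ[ℂ] t)) ⊗ₜ[ℂ] s) = (p ⊗ₜ[ℂ] q) ⊗ₜ[ℂ] (t ⊗ₜ[ℂ] s) := by
  simp [ρΨ]

@[simp] lemma ρΦ_tmul (p q t s : B) :
    ρΦ ((p ⊗ₜ[ℂ] (q ⊗ₜ[ℂ] t)) ⊗ₜ[ℂ] s) = (p ⊗ₜ[ℂ] t) ⊗ₜ[ℂ] (q ⊗ₜ[ℂ] s) := by
  simp [ρΦ]

lemma key_lemma
    (hcocomm : (TensorProduct.comm ℂ B B).toLinearMap ∘ₗ comul (R := ℂ)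
      = comul (R := ℂ) (A := B)) (x : B) :
    TensorProduct.tensorTensorTensorComm ℂ B B B B (TensorProduct.map Δ Δ (Δ x))
      = TensorProduct.map Δ Δ (Δ x) := by
  classical
  set r := ℛ ℂ x with hr
  set a := fun i => ℛ ℂ (r.left i) with ha
  -- E1 : (Δ ⊗ Δ)(Δ x) = ∑ i j, Δ(aL i j) ⊗ (aR i j ⊗ r.right i)
  have E1 : TensorProduct.map Δ Δ (Δ x)
      = ∑ i ∈ r.index, ∑ j ∈ (a i).index,
          Δ ((a i).left j) ⊗ₜ[ℂ] ((a i).right j ⊗ₜ[ℂ] r.right i) := by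
    have h3 := sum_tmul_tmul_eq (R := ℂ) r a (fun i => ℛ ℂ (r.right i))
    have h4 := congrArg (TensorProduct.map Δ (LinearMap.id (M := B ⊗[ℂ] B))) h3
    simp only [map_sum, TensorProduct.map_tmul, LinearMap.id_coe, id_eq] at h4
    rw [h4, ← r.eq, map_sum]
    refine Finset.sum_congr rfl fun i _ => ?_
    rw [TensorProduct.map_tmul, ← (ℛ ℂ (r.right i)).eq, tmul_sum]
  rw [E1]
  simp only [map_sum]
  refine Finset.sum_congr rfl fun i _ => ?_
  -- per-i goal
  set d := fun j => ℛ ℂ ((a i).left j) with hd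
  set c := fun j => ℛ ℂ ((a i).right j) with hc
  have h3i := sum_tmul_tmul_eq (R := ℂ) (a i) d c
  have hPsi := congrArg (fun z => ρΨ (z ⊗ₜ[ℂ] r.right i)) h3i
  have hPhi := congrArg (fun z => ρΦ (z ⊗ₜ[ℂ] r.right i)) h3i
  simp only [sum_tmul, map_sum, ρΨ_tmul, ρΦ_tmul] at hPsi hPhi
  -- expand LHS: ∑ j, ttc (Δ (aL i j) ⊗ (aR i j ⊗ rᵢ))
  have expandL : ∀ j ∈ (a i).index,
      TensorProduct.tensorTensorTensorComm ℂ B B B B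
        (Δ ((a i).left j) ⊗ₜ[ℂ] ((a i).right j ⊗ₜ[ℂ] r.right i))
      = ∑ n ∈ (d j).index,
          ((d j).left n ⊗ₜ[ℂ] (a i).right j) ⊗ₜ[ℂ] ((d j).right n ⊗ₜ[ℂ] r.right i) := by
    intro j _
    rw [← (d j).eq, sum_tmul, map_sum]
    simp [tensorTensorTensorComm_tmul]
  have expandR : ∀ j ∈ (a i).index,
      Δ ((a i).left j) ⊗ₜ[ℂ] ((a i).right j ⊗ₜ[ℂ] r.right i)
      = ∑ n ∈ (d j).index,
          ((d j).left n ⊗ₜ[ℂ] (d j).right n) ⊗ₜ[ℂ] ((a i).right j ⊗ₜ[ℂ] r.right i) := by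
    intro j _
    rw [← (d j).eq, sum_tmul]
  rw [Finset.sum_congr rfl expandL, Finset.sum_congr rfl expandR]
  -- now use hPhi, swap, hPsi
  rw [hPhi]
  conv_rhs => rw [hPsi]
  -- remains: ∑ j m, (aL ⊗ cR) ⊗ (cL ⊗ rᵢ) = ∑ j m, (aL ⊗ cL) ⊗ (cR ⊗ rᵢ)
  refine Finset.sum_congr rfl fun j _ => ?_
  have hswap : (∑ m ∈ (c j).index, (c j).right m ⊗ₜ[ℂ] (c j).left m)
      = ∑ m ∈ (c j).index, (c j).left m ⊗ₜ[ℂ] (c j).right m := by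
    have h5 := congrArg (TensorProduct.comm ℂ B B) ((c j).eq)
    have h6 := LinearMap.congr_fun hcocomm ((a i).right j)
    simp only [LinearMap.comp_apply, LinearEquiv.coe_coe] at h6
    rw [map_sum] at h5
    simp only [comm_tmul] at h5
    rw [h5, h6, ← (c j).eq]
  have := congrArg (fun z => ρΦ (((a i).left j ⊗ₜ[ℂ] z) ⊗ₜ[ℂ] r.right i)) hswap
  simp only [tmul_sum, sum_tmul, map_sum, ρΦ_tmul] at this
  exact this.symm
end Key

noncomputable section HopfFacts2
variable {B : Type} [Ring B] [HopfAlgebra ℂ B]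
local notation "S" => HopfAlgebra.antipode (R := ℂ) (A := B)
local notation "Δ" => Coalgebra.comul (R := ℂ) (A := B)

lemma cv_comul_SS
    (hcocomm : (TensorProduct.comm ℂ B B).toLinearMap ∘ₗ comul (R := ℂ)
      = comul (R := ℂ) (A := B)) :
    cv Δ ((TensorProduct.map S S) ∘ₗ Δ) = (cu : B →ₗ[ℂ] B ⊗[ℂ] B) := by
  ext x
  have hm : TensorProduct.map Δ ((TensorProduct.map S S) ∘ₗ Δ)
      = (TensorProduct.map (LinearMap.id (M := B ⊗[ℂ] B)) (TensorProduct.map S S)) ∘ₗ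
        TensorProduct.map Δ Δ := by
    rw [← TensorProduct.map_comp, LinearMap.id_comp]
  rw [cv, LinearMap.comp_apply, LinearMap.comp_apply, hm, LinearMap.comp_apply,
    ← key_lemma hcocomm x]
  set r := ℛ ℂ x with hr
  have hE : TensorProduct.map Δ Δ (Δ x) = ∑ i ∈ r.index, Δ (r.left i) ⊗ₜ[ℂ] Δ (r.right i) := by
    rw [← r.eq, map_sum]
    exact Finset.sum_congr rfl fun i _ => rfl
  rw [hE]
  simp only [map_sum]
  have hterm : ∀ i ∈ r.index,
      LinearMap.mul' ℂ (B ⊗[ℂ] B)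
        ((TensorProduct.map LinearMap.id (TensorProduct.map S S))
          (TensorProduct.tensorTensorTensorComm ℂ B B B B
            (Δ (r.left i) ⊗ₜ[ℂ] Δ (r.right i))))
      = (counit (R := ℂ) (r.left i) * counit (R := ℂ) (r.right i)) •
          ((1 : B) ⊗ₜ[ℂ] (1 : B)) := by
    intro i _
    set a := ℛ ℂ (r.left i)
    set b := ℛ ℂ (r.right i)
    rw [← a.eq, ← b.eq, sum_tmul]
    simp only [map_sum, tmul_sum, tensorTensorTensorComm_tmul, TensorProduct.map_tmul,
      LinearMap.id_coe, id_eq, LinearMap.mul'_apply, Algebra.TensorProduct.tmul_mul_tmul]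
    simp_rw [← tmul_sum]
    rw [← sum_tmul, HopfAlgebra.sum_mul_antipode_eq_smul a, HopfAlgebra.sum_mul_antipode_eq_smul b,
      ← smul_tmul', tmul_smul, smul_smul]
  rw [Finset.sum_congr rfl hterm, ← Finset.sum_smul]
  have hsum : ∑ i ∈ r.index, counit (R := ℂ) (r.left i) * counit (R := ℂ) (r.right i)
      = counit (R := ℂ) x := by
    have := congrArg (counit (R := ℂ) (A := B)) (sum_counit_smul_right r)
    rw [map_sum] at this
    simpa [smul_eq_mul] using this
  rw [hsum, cu_apply, Algebra.TensorProduct.one_def]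

lemma comul_antipode
    (hcocomm : (TensorProduct.comm ℂ B B).toLinearMap ∘ₗ comul (R := ℂ)
      = comul (R := ℂ) (A := B)) :
    Δ ∘ₗ S = (TensorProduct.map S S) ∘ₗ Δ :=
  (cv_inv_unique (cv_comul_SS hcocomm) cv_comulS_comul).symm

lemma cu_comp_antipode {A : Type} [Ring A] [Algebra ℂ A] :
    (cu : B →ₗ[ℂ] A) ∘ₗ S = cu := by
  ext x
  simp only [LinearMap.comp_apply, cu_apply]
  rw [show counit (R := ℂ) (S x) = counit (R := ℂ) x from
    LinearMap.congr_fun counit_comp_antipode x]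

lemma cv_comp_antipode
    (hcocomm : (TensorProduct.comm ℂ B B).toLinearMap ∘ₗ comul (R := ℂ)
      = comul (R := ℂ) (A := B))
    {A : Type} [Ring A] [Algebra ℂ A] (f g : B →ₗ[ℂ] A) :
    (cv f g) ∘ₗ S = cv (f ∘ₗ S) (g ∘ₗ S) := by
  ext x
  have h1 := LinearMap.congr_fun (comul_antipode hcocomm) x
  simp only [LinearMap.comp_apply] at h1 ⊢
  rw [cv, cv]
  simp only [LinearMap.comp_apply]
  rw [h1, TensorProduct.map_comp, LinearMap.comp_apply]

set_option maxHeartbeats 1000000 in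
lemma antipode_antipode
    (hcocomm : (TensorProduct.comm ℂ B B).toLinearMap ∘ₗ comul (R := ℂ)
      = comul (R := ℂ) (A := B)) :
    (S) ∘ₗ (S) = LinearMap.id := by
  have e1 := cv_comp_antipode hcocomm S LinearMap.id
  conv at e1 => lhs; rw [cv_S_id, cu_comp_antipode]
  rw [LinearMap.id_comp] at e1
  exact (cv_inv_unique cv_S_id e1.symm).symm
end HopfFacts2


section StepB
variable {B : Type} [Ring B] [HopfAlgebra ℂ B]
local notation "S" => HopfAlgebra.antipode (R := ℂ) (A := B)
local notation "Δ" => Coalgebra.comul (R := ℂ) (A := B)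

lemma sum_counit_smul_right' {ι : Type*} {x : B} (r : Coalgebra.Repr ℂ x ι) :
    ∑ i ∈ r.index, counit (R := ℂ) (r.left i) • r.right i = x := by
  have h := congrArg (TensorProduct.lid ℂ B) (sum_counit_tmul_eq r)
  rw [map_sum] at h
  simp only [_root_.TensorProduct.lid_tmul, one_smul] at h
  exact h

lemma sum_counit_smul_left' {ι : Type*} {x : B} (r : Coalgebra.Repr ℂ x ι) :
    ∑ i ∈ r.index, counit (R := ℂ) (r.right i) • r.left i = x := by
  have h := congrArg (TensorProduct.rid ℂ B) (sum_tmul_counit_eq r)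
  rw [map_sum] at h
  simp only [_root_.TensorProduct.rid_tmul, one_smul] at h
  exact h

lemma stepB (L : B ⊗[ℂ] B →ₗ[ℂ] ℂ)
    (hnorm : L (1 ⊗ₜ[ℂ] 1) = 0)
    (hcocycle : ∀ a b c : B,
      counit (R := ℂ) a * L (b ⊗ₜ[ℂ] c) - L ((a * b) ⊗ₜ[ℂ] c)
        + L (a ⊗ₜ[ℂ] (b * c)) - L (a ⊗ₜ[ℂ] b) * counit (R := ℂ) c = 0)
    (x : B) :
    L (TensorProduct.map S LinearMap.id (Δ x)) = L (TensorProduct.map LinearMap.id S (Δ x)) := by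
  classical
  have Lright : ∀ b : B, L (b ⊗ₜ[ℂ] 1) = 0 := by
    intro b
    have h := hcocycle b 1 1
    simp only [hnorm, mul_zero, one_mul, mul_one, Bialgebra.counit_one, zero_sub] at h
    linear_combination -h
  have Lleft : ∀ b : B, L ((1 : B) ⊗ₜ[ℂ] b) = 0 := by
    intro b
    have h := hcocycle 1 1 b
    simp only [hnorm, zero_mul, one_mul, mul_one, Bialgebra.counit_one] at h
    linear_combination h
  set r := ℛ ℂ x with hrdef
  set a := fun i => ℛ ℂ (r.left i) with ha
  set c := fun i => ℛ ℂ (r.right i) with hc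
  have hx : ∑ i ∈ r.index, counit (R := ℂ) (r.left i) • r.right i = x :=
    sum_counit_smul_right' r
  -- sum of the cocycle identity over (r.left i, S (cL i k), cR i k)
  have h0 : ∑ i ∈ r.index, ∑ k ∈ (c i).index,
      (counit (R := ℂ) (r.left i) * L (S ((c i).left k) ⊗ₜ[ℂ] (c i).right k)
        - L ((r.left i * S ((c i).left k)) ⊗ₜ[ℂ] (c i).right k)
        + L (r.left i ⊗ₜ[ℂ] (S ((c i).left k) * (c i).right k))
        - L (r.left i ⊗ₜ[ℂ] S ((c i).left k)) * counit (R := ℂ) ((c i).right k)) = 0 :=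
    Finset.sum_eq_zero fun i _ => Finset.sum_eq_zero fun k _ =>
      hcocycle (r.left i) (S ((c i).left k)) ((c i).right k)
  simp only [Finset.sum_sub_distrib, Finset.sum_add_distrib] at h0
  -- Term 1
  have hT1 : ∑ i ∈ r.index, ∑ k ∈ (c i).index,
      counit (R := ℂ) (r.left i) * L (S ((c i).left k) ⊗ₜ[ℂ] (c i).right k)
      = L (TensorProduct.map S LinearMap.id (Δ x)) := by
    have inner : ∀ i ∈ r.index,
        ∑ k ∈ (c i).index,
          counit (R := ℂ) (r.left i) * L (S ((c i).left k) ⊗ₜ[ℂ] (c i).right k)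
        = L (TensorProduct.map S LinearMap.id
            (Δ (counit (R := ℂ) (r.left i) • r.right i))) := by
      intro i _
      rw [← Finset.mul_sum, ← map_sum]
      rw [map_smul, map_smul, map_smul, smul_eq_mul]
      congr 1
      rw [← (c i).eq, map_sum]
      simp [TensorProduct.map_tmul]
    rw [Finset.sum_congr rfl inner, ← map_sum, ← map_sum, ← map_sum, hx]
  -- Term 4
  have hT4 : ∑ i ∈ r.index, ∑ k ∈ (c i).index,
      L (r.left i ⊗ₜ[ℂ] S ((c i).left k)) * counit (R := ℂ) ((c i).right k)
      = L (TensorProduct.map LinearMap.id S (Δ x)) := by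
    have inner : ∀ i ∈ r.index,
        ∑ k ∈ (c i).index,
          L (r.left i ⊗ₜ[ℂ] S ((c i).left k)) * counit (R := ℂ) ((c i).right k)
        = L (r.left i ⊗ₜ[ℂ] S (r.right i)) := by
      intro i _
      have : ∀ k ∈ (c i).index,
          L (r.left i ⊗ₜ[ℂ] S ((c i).left k)) * counit (R := ℂ) ((c i).right k)
          = L (r.left i ⊗ₜ[ℂ] S (counit (R := ℂ) ((c i).right k) • (c i).left k)) := by
        intro k _
        rw [map_smul, tmul_smul, map_smul, smul_eq_mul, mul_comm]
      rw [Finset.sum_congr rfl this]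
      calc ∑ k ∈ (c i).index,
            L (r.left i ⊗ₜ[ℂ] S (counit (R := ℂ) ((c i).right k) • (c i).left k))
          = L (r.left i ⊗ₜ[ℂ] S (∑ k ∈ (c i).index,
              counit (R := ℂ) ((c i).right k) • (c i).left k)) := by
            rw [map_sum, tmul_sum, map_sum]
        _ = L (r.left i ⊗ₜ[ℂ] S (r.right i)) := by rw [sum_counit_smul_left' (c i)]
    rw [Finset.sum_congr rfl inner, ← r.eq, map_sum, map_sum]
    simp [TensorProduct.map_tmul]
  -- Term 3
  have hT3 : ∑ i ∈ r.index, ∑ k ∈ (c i).index,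
      L (r.left i ⊗ₜ[ℂ] (S ((c i).left k) * (c i).right k)) = 0 := by
    refine Finset.sum_eq_zero fun i _ => ?_
    calc ∑ k ∈ (c i).index, L (r.left i ⊗ₜ[ℂ] (S ((c i).left k) * (c i).right k))
        = L (r.left i ⊗ₜ[ℂ] (∑ k ∈ (c i).index, S ((c i).left k) * (c i).right k)) := by
          rw [tmul_sum, map_sum]
      _ = 0 := by
          rw [HopfAlgebra.sum_antipode_mul_eq_smul (c i), tmul_smul, map_smul,
            Lright, smul_zero]
  -- Term 2
  have hT2 : ∑ i ∈ r.index, ∑ k ∈ (c i).index,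
      L ((r.left i * S ((c i).left k)) ⊗ₜ[ℂ] (c i).right k) = 0 := by
    have h3 := sum_map_tmul_tmul_eq (R := ℂ) (LinearMap.id (M := B)) (S) (LinearMap.id (M := B))
      x (repr := r) (a₁ := a) (a₂ := c)
    have h4 := congrArg ((LinearMap.mul' ℂ B).rTensor B ∘ₗ
      (TensorProduct.assoc ℂ B B B).symm.toLinearMap) h3
    simp only [map_sum, LinearMap.comp_apply, LinearEquiv.coe_coe, _root_.TensorProduct.assoc_symm_tmul,
      rTensor_tmul, LinearMap.mul'_apply, LinearMap.id_coe, id_eq] at h4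
    have h5 : ∑ i ∈ r.index, ∑ j ∈ (a i).index,
        ((a i).left j * S ((a i).right j)) ⊗ₜ[ℂ] r.right i = (1 : B) ⊗ₜ[ℂ] x := by
      have inner : ∀ i ∈ r.index,
          ∑ j ∈ (a i).index, ((a i).left j * S ((a i).right j)) ⊗ₜ[ℂ] r.right i
          = (1 : B) ⊗ₜ[ℂ] (counit (R := ℂ) (r.left i) • r.right i) := by
        intro i _
        rw [← sum_tmul, HopfAlgebra.sum_mul_antipode_eq_smul (a i), smul_tmul]
      rw [Finset.sum_congr rfl inner, ← tmul_sum, hx]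
    calc ∑ i ∈ r.index, ∑ k ∈ (c i).index,
          L ((r.left i * S ((c i).left k)) ⊗ₜ[ℂ] (c i).right k)
        = L (∑ i ∈ r.index, ∑ k ∈ (c i).index,
            (r.left i * S ((c i).left k)) ⊗ₜ[ℂ] (c i).right k) := by
          rw [map_sum]; exact Finset.sum_congr rfl fun i _ => (map_sum _ _ _).symm
      _ = L ((1 : B) ⊗ₜ[ℂ] x) := by rw [h4, h5]
      _ = 0 := Lleft x
  rw [hT1, hT2, hT3, hT4] at h0
  linear_combination h0
end StepB

/-- Let `B` be a cocommutative Hopf algebra (`Δ = τ ∘ Δ`), `L` a normalized commuting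
2-cocycle and `σ = L ∘ (id ⊗ S) ∘ Δ`.  Then `σ ∘ S = σ`. -/
theorem stmt18
    (hcocomm : (TensorProduct.comm ℂ B B).toLinearMap ∘ₗ comul (R := ℂ)
      = comul (R := ℂ) (A := B))
    (L : B ⊗[ℂ] B →ₗ[ℂ] ℂ)
    (hnorm : L (1 ⊗ₜ[ℂ] 1) = 0)
    (hcomm : LconvMu L = MuConvL L)
    (hcocycle : ∀ a b c : B,
      counit (R := ℂ) a * L (b ⊗ₜ[ℂ] c) - L ((a * b) ⊗ₜ[ℂ] c)
        + L (a ⊗ₜ[ℂ] (b * c)) - L (a ⊗ₜ[ℂ] b) * counit (R := ℂ) c = 0) :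
    sigma L ∘ₗ HopfAlgebra.antipode (R := ℂ) = sigma L := by
  have hSS := antipode_antipode hcocomm
  have hDS := comul_antipode hcocomm
  have hcomp : TensorProduct.map (LinearMap.id (M := B)) (HopfAlgebra.antipode (R := ℂ)) ∘ₗ
      TensorProduct.map (HopfAlgebra.antipode (R := ℂ)) (HopfAlgebra.antipode (R := ℂ))
      = TensorProduct.map (HopfAlgebra.antipode (R := ℂ)) (LinearMap.id (M := B)) := by
    rw [← TensorProduct.map_comp, LinearMap.id_comp, hSS]
  ext x
  simp only [sigma, LinearMap.comp_apply]
  have h1 : comul (R := ℂ) (HopfAlgebra.antipode (R := ℂ) (A := B) x)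
      = TensorProduct.map (HopfAlgebra.antipode (R := ℂ)) (HopfAlgebra.antipode (R := ℂ))
          (comul (R := ℂ) x) := by
    have := LinearMap.congr_fun hDS x
    simpa using this
  rw [h1]
  have h2 := LinearMap.congr_fun hcomp (comul (R := ℂ) x)
  simp only [LinearMap.comp_apply] at h2
  rw [h2]
  exact stepB L hnorm hcocycle x
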